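/- Fix s>0, N∈ℕ with N≥1, and c∈ℝ^N with |c_i|<1 for all i. Then Φ_N satisfies the recursion Φ_N(c_1,…,c_N) = (1/B(2sN,2s)) ∫_0^1 (1−t c_1)^{−2s} t^{2sN−1} (1−t)^{2s−1} Φ_{N−1}(t c_2,…,t c_N) dt, where B(a,b)=Γ(a)Γ(b)/Γ(a+b) is the Beta function and Φ_0 is by convention the constant function 1. -/

import Mathlib

/-- `𝒩_i^+(η) = Σ_{k=i}^{N} η_k` (0-based indexing: the sum of `η k` over `k ≥ i`). -/
def Nplus {N : ℕ} (η : Fin N → ℕ) (i : Fin N) : ℕ :=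
  ∑ k : Fin N, if i ≤ k then η k else 0

/-- `Φ_N(c) = (Γ(2s(N+1))/Γ(2s)) · Σ_{η∈ℕ^N} ∏_{i=1}^{N} [ c_i^{η_i} · Γ(η_i+2s)/(Γ(2s)·η_i!) ·
Γ(2s(N+1−i)+𝒩_i^+(η))/Γ(2s(N+2−i)+𝒩_i^+(η)) ]` (here `i : Fin N` is 0-based, so the paper's
`N+1−i` and `N+2−i` become `N−i` and `N+1−i`). -/
noncomputable def PhiFun (s : ℝ) {N : ℕ} (c : Fin N → ℝ) : ℝ :=
  (Real.Gamma (2 * s * ((N : ℝ) + 1)) / Real.Gamma (2 * s)) *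
    ∑' η : Fin N → ℕ, ∏ i : Fin N,
      (c i ^ η i * (Real.Gamma ((η i : ℝ) + 2 * s) / (Real.Gamma (2 * s) * ((η i).factorial : ℝ)))
        * (Real.Gamma (2 * s * ((N : ℝ) - (i : ℕ)) + (Nplus η i : ℝ)) /
            Real.Gamma (2 * s * ((N : ℝ) + 1 - (i : ℕ)) + (Nplus η i : ℝ))))


open MeasureTheory Set Filter

noncomputable def Acoef (a : ℝ) (k : ℕ) : ℝ :=
  Real.Gamma ((k : ℝ) + a) / (Real.Gamma a * (k.factorial : ℝ))

noncomputable def Gfac (a r : ℝ) (m : ℕ) : ℝ :=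
  Real.Gamma (r + (m : ℝ)) / Real.Gamma (r + a + (m : ℝ))

noncomputable def Ffun (a : ℝ) {N : ℕ} (c : Fin N → ℝ) (η : Fin N → ℕ) : ℝ :=
  ∏ i : Fin N, (c i ^ η i * Acoef a (η i) * Gfac a (a * ((N : ℝ) - (i : ℕ))) (Nplus η i))

lemma Acoef_pos {a : ℝ} (ha : 0 < a) (k : ℕ) : 0 < Acoef a k := by
  apply div_pos (Real.Gamma_pos_of_pos (by positivity))
  exact mul_pos (Real.Gamma_pos_of_pos ha) (by exact_mod_cast k.factorial_pos)

lemma Gfac_pos {a r : ℝ} (ha : 0 < a) (hr : 0 < r) (m : ℕ) : 0 < Gfac a r m := by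
  apply div_pos (Real.Gamma_pos_of_pos (by positivity)) (Real.Gamma_pos_of_pos (by positivity))

lemma Gfac_le {a r : ℝ} (ha : 0 < a) (hr : 0 < r) (m : ℕ) : Gfac a r m ≤ Gfac a r 0 := by
  induction m with
  | zero => exact le_rfl
  | succ n ih =>
    refine le_trans ?_ ih
    unfold Gfac
    have h1 : r + ((n + 1 : ℕ) : ℝ) = (r + (n : ℕ)) + 1 := by push_cast; ring
    have h2 : r + a + ((n + 1 : ℕ) : ℝ) = (r + a + (n : ℕ)) + 1 := by push_cast; ring
    have hrn : (0:ℝ) < r + (n:ℕ) := by positivity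
    have hran : (0:ℝ) < r + a + (n:ℕ) := by positivity
    rw [h1, h2, Real.Gamma_add_one (ne_of_gt hrn), Real.Gamma_add_one (ne_of_gt hran)]
    rw [mul_div_mul_comm]
    have hle : (r + (n:ℕ)) / (r + a + (n:ℕ)) ≤ 1 := by
      rw [div_le_one hran]; linarith
    calc (r + (n:ℕ)) / (r + a + (n:ℕ)) * (Real.Gamma (r+(n:ℕ)) / Real.Gamma (r+a+(n:ℕ)))
        ≤ 1 * (Real.Gamma (r+(n:ℕ)) / Real.Gamma (r+a+(n:ℕ))) := by
          apply mul_le_mul_of_nonneg_right hle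
          positivity
      _ = Real.Gamma (r+(n:ℕ)) / Real.Gamma (r+a+(n:ℕ)) := one_mul _

lemma summable_ratio {a : ℝ} (ha : 0 < a) {y : ℝ} (hy0 : 0 ≤ y) (hy : y < 1) :
    Summable (fun k : ℕ => Real.Gamma ((k : ℝ) + a) / (k.factorial : ℝ) * y ^ k) := by
  rcases eq_or_lt_of_le hy0 with h0 | h0
  · apply summable_of_ne_finset_zero (s := {0})
    intro k hk
    have : k ≠ 0 := by simpa using hk
    simp [← h0, zero_pow this]
  · set f : ℕ → ℝ := fun k => Real.Gamma ((k : ℝ) + a) / (k.factorial : ℝ) * y ^ k with hf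
    have hfpos : ∀ k, 0 < f k := by
      intro k
      apply mul_pos (div_pos (Real.Gamma_pos_of_pos (by positivity))
        (by exact_mod_cast k.factorial_pos))
      positivity
    apply summable_of_ratio_test_tendsto_lt_one hy
      (Eventually.of_forall fun n => ne_of_gt (hfpos n))
    have key : ∀ n : ℕ, ‖f (n + 1)‖ / ‖f n‖ = y * (1 + (a - 1) / ((n : ℝ) + 1)) := by
      intro n
      rw [Real.norm_of_nonneg (hfpos (n+1)).le, Real.norm_of_nonneg (hfpos n).le, hf]
      have hG : Real.Gamma (((n + 1 : ℕ) : ℝ) + a) = ((n : ℝ) + a) * Real.Gamma ((n : ℝ) + a) := by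
        rw [show ((n + 1 : ℕ) : ℝ) + a = ((n : ℝ) + a) + 1 by push_cast; ring]
        exact Real.Gamma_add_one (by positivity)
      have hfact : ((n + 1).factorial : ℝ) = ((n : ℝ) + 1) * (n.factorial : ℝ) := by
        rw [Nat.factorial_succ]; push_cast; ring
      have hΓ := (Real.Gamma_pos_of_pos (show (0:ℝ) < (n:ℝ) + a by positivity)).ne'
      have hfa : ((n.factorial : ℝ)) ≠ 0 := by exact_mod_cast n.factorial_pos.ne'
      have hyn : y ^ n ≠ 0 := (pow_pos h0 n).ne'
      have hn1 : ((n : ℝ) + 1) ≠ 0 := by positivity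
      simp only [hG, hfact, pow_succ]
      field_simp
      ring
    rw [funext key]
    have h1 : Tendsto (fun n : ℕ => (a - 1) / ((n : ℝ) + 1)) atTop (nhds 0) := by
      have := (tendsto_const_div_atTop_nhds_zero_nat (a - 1)).comp (tendsto_add_atTop_nat 1)
      simpa [Function.comp_def] using this
    have := ((tendsto_const_nhds (x := (1:ℝ))).add h1).const_mul y
    simpa using this

lemma summable_Acoef {a : ℝ} (ha : 0 < a) {y : ℝ} (hy0 : 0 ≤ y) (hy : y < 1) :
    Summable (fun k : ℕ => Acoef a k * y ^ k) := by
  apply Summable.congr ((summable_ratio ha hy0 hy).mul_right (Real.Gamma a)⁻¹)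
  intro k
  simp only [Acoef, div_eq_mul_inv, mul_inv]
  ring

theorem hasSum_binom {a : ℝ} (ha : 0 < a) {x : ℝ} (hx : |x| < 1) :
    HasSum (fun k : ℕ => Acoef a k * x ^ k) ((1 - x) ^ (-a)) := by
  obtain ⟨hx1, hx2⟩ := abs_lt.mp hx
  have h1x : (0:ℝ) < 1 - x := by linarith
  have habs : Summable (fun k : ℕ => |Acoef a k * x ^ k|) := by
    apply Summable.congr (summable_Acoef ha (abs_nonneg x) hx)
    intro k
    rw [abs_mul, abs_pow, abs_of_pos (Acoef_pos ha k)]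
  have hsum : Summable (fun k : ℕ => Acoef a k * x ^ k) := habs.of_abs
  rw [hsum.hasSum_iff]
  -- the family of integrands
  set f : ℕ → ℝ → ℝ := fun k u => (x ^ k / (k.factorial : ℝ)) * (Real.exp (-u) * u ^ (a + k - 1))
    with hfdef
  have hint : ∀ k, Integrable (f k) (volume.restrict (Ioi (0:ℝ))) := by
    intro k
    exact (Real.GammaIntegral_convergent (by positivity : (0:ℝ) < a + k)).const_mul _
  have hval : ∀ (y : ℝ) (k : ℕ),
      (∫ u in Ioi (0:ℝ), (y ^ k / (k.factorial : ℝ)) * (Real.exp (-u) * u ^ (a + (k:ℝ) - 1)))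
        = y ^ k / (k.factorial : ℝ) * Real.Gamma (a + k) := by
    intro y k
    rw [MeasureTheory.integral_const_mul]
    congr 1
    have h := Real.integral_rpow_mul_exp_neg_mul_Ioi
      (show (0:ℝ) < a + k by positivity) one_pos
    simp only [one_mul, one_div, inv_one, Real.one_rpow] at h
    rw [← h]
    apply setIntegral_congr_fun measurableSet_Ioi
    intro u _
    exact mul_comm _ _
  have hnormval : ∀ k, (∫ u in Ioi (0:ℝ), ‖f k u‖)
      = |x| ^ k / (k.factorial : ℝ) * Real.Gamma (a + k) := by
    intro k
    rw [← hval |x| k]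
    apply setIntegral_congr_fun measurableSet_Ioi
    intro u hu
    have hu0 : (0:ℝ) ≤ u := (le_of_lt hu)
    simp only [hfdef]
    rw [Real.norm_eq_abs, abs_mul, abs_mul, abs_div, abs_pow, abs_of_nonneg (Real.exp_nonneg _),
      abs_of_nonneg (Real.rpow_nonneg hu0 _), Nat.abs_cast]
  have hnorm : Summable fun k => ∫ u in Ioi (0:ℝ), ‖f k u‖ := by
    apply Summable.congr _ (fun k => (hnormval k).symm)
    apply Summable.congr (summable_ratio ha (abs_nonneg x) hx)
    intro k
    rw [add_comm a (k:ℝ)]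
    ring
  have key := MeasureTheory.integral_tsum_of_summable_integral_norm hint hnorm
  have hpt : EqOn (fun u => ∑' k, f k u)
      (fun u => u ^ (a - 1) * Real.exp (-((1 - x) * u))) (Ioi (0:ℝ)) := by
    intro u hu
    have hu0 : (0:ℝ) < u := hu
    have hexp : HasSum (fun k : ℕ => (x * u) ^ k / (k.factorial : ℝ)) (Real.exp (x * u)) := by
      rw [Real.exp_eq_exp_ℝ, NormedSpace.exp_eq_tsum_div]
      exact (NormedSpace.expSeries_div_summable (x * u)).hasSum
    have h2 := hexp.mul_left (u ^ (a - 1) * Real.exp (-u))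
    have h3 : ∀ k : ℕ, f k u
        = u ^ (a-1) * Real.exp (-u) * ((x * u) ^ k / (k.factorial : ℝ)) := by
      intro k
      have : u ^ (a + (k:ℝ) - 1) = u ^ (a - 1) * u ^ k := by
        rw [show a + (k:ℝ) - 1 = (a - 1) + (k:ℝ) by ring, Real.rpow_add hu0, Real.rpow_natCast]
      simp only [hfdef, this, mul_pow]
      ring
    simp only [h3]
    rw [h2.tsum_eq]
    rw [show -((1 - x) * u) = -u + x * u by ring, Real.exp_add]
    ring
  rw [setIntegral_congr_fun measurableSet_Ioi hpt] at key
  rw [Real.integral_rpow_mul_exp_neg_mul_Ioi ha h1x] at key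
  have hL : ∀ k : ℕ, (∫ u in Ioi (0:ℝ), f k u) = x ^ k / (k.factorial : ℝ) * Real.Gamma (a + k) :=
    fun k => hval x k
  rw [tsum_congr hL] at key
  -- key : ∑' k, x^k/k! * Γ(a+k) = (1/(1-x))^a * Γ a
  have hfin : ∀ k : ℕ, Acoef a k * x ^ k
      = (x ^ k / (k.factorial : ℝ) * Real.Gamma (a + k)) * (Real.Gamma a)⁻¹ := by
    intro k
    rw [add_comm a (k:ℝ)]
    simp only [Acoef, div_eq_mul_inv, mul_inv]
    ring
  rw [tsum_congr hfin, tsum_mul_right, key]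
  rw [one_div, Real.inv_rpow h1x.le, ← Real.rpow_neg h1x.le]
  field_simp [(Real.Gamma_pos_of_pos ha).ne']

lemma betaIntegrable_left {p q : ℝ} (hp : 0 < p) :
    IntervalIntegrable (fun t : ℝ => t ^ (p - 1) * (1 - t) ^ (q - 1)) volume 0 (1/2) := by
  apply IntervalIntegrable.mul_continuousOn
    (intervalIntegral.intervalIntegrable_rpow' (by linarith))
  apply ContinuousOn.rpow_const (continuousOn_const.sub continuousOn_id)
  intro t ht
  rw [uIcc_of_le (by norm_num : (0:ℝ) ≤ 1/2)] at ht
  left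
  intro h
  simp only [Pi.sub_apply, id_eq] at h
  have := ht.2
  linarith

lemma betaIntegrable {p q : ℝ} (hp : 0 < p) (hq : 0 < q) :
    IntervalIntegrable (fun t : ℝ => t ^ (p - 1) * (1 - t) ^ (q - 1)) volume 0 1 := by
  apply (betaIntegrable_left (q := q) hp).trans
  have h := ((betaIntegrable_left (q := p) hq).comp_sub_left 1).symm
  convert h using 1
  · funext t
    rw [sub_sub_cancel]
    ring
  · norm_num
  · norm_num

lemma betaValue {p q : ℝ} (hp : 0 < p) (hq : 0 < q) :
    ∫ t in (0:ℝ)..1, t ^ (p - 1) * (1 - t) ^ (q - 1)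
      = Real.Gamma p * Real.Gamma q / Real.Gamma (p + q) := by
  have h := Complex.Gamma_mul_Gamma_eq_betaIntegral
    (s := (p : ℂ)) (t := (q : ℂ)) (by simpa using hp) (by simpa using hq)
  have h2 : Complex.betaIntegral (p : ℂ) (q : ℂ)
      = ((∫ t in (0:ℝ)..1, t ^ (p - 1) * (1 - t) ^ (q - 1) : ℝ) : ℂ) := by
    rw [Complex.betaIntegral, ← intervalIntegral.integral_ofReal]
    apply intervalIntegral.integral_congr
    intro t ht
    rw [uIcc_of_le (zero_le_one' ℝ)] at ht
    obtain ⟨ht0, ht1⟩ := ht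
    show (t:ℂ) ^ ((p:ℂ) - 1) * (1 - (t:ℂ)) ^ ((q:ℂ) - 1)
        = ((t ^ (p - 1) * (1 - t) ^ (q - 1) : ℝ) : ℂ)
    rw [Complex.ofReal_mul, Complex.ofReal_cpow ht0, Complex.ofReal_cpow (by linarith : (0:ℝ) ≤ 1 - t)]
    push_cast
    ring
  rw [h2, Complex.Gamma_ofReal, Complex.Gamma_ofReal, ← Complex.ofReal_add,
    Complex.Gamma_ofReal, ← Complex.ofReal_mul, ← Complex.ofReal_mul] at h
  have h3 := Complex.ofReal_inj.mp h
  have hΓ : Real.Gamma (p + q) ≠ 0 := (Real.Gamma_pos_of_pos (by linarith)).ne'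
  rw [eq_div_iff hΓ]
  rw [h3]
  ring

lemma Nplus_cons_zero {N : ℕ} (k : ℕ) (η : Fin N → ℕ) :
    Nplus (Fin.cons k η) 0 = k + ∑ i, η i := by
  unfold Nplus
  rw [Fin.sum_univ_succ]
  simp [Fin.zero_le]

lemma Nplus_cons_succ {N : ℕ} (k : ℕ) (η : Fin N → ℕ) (j : Fin N) :
    Nplus (Fin.cons k η) j.succ = Nplus η j := by
  unfold Nplus
  rw [Fin.sum_univ_succ]
  have h0 : ¬ j.succ ≤ (0 : Fin (N+1)) :=
    fun h => (Fin.succ_ne_zero j) (le_antisymm h (Fin.zero_le _))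
  simp [h0, Fin.cons_succ, Fin.succ_le_succ_iff]

lemma Ffun_cons {N : ℕ} (a : ℝ) (c : Fin (N+1) → ℝ) (k : ℕ) (η : Fin N → ℕ) :
    Ffun a c (Fin.cons k η)
      = c 0 ^ k * Acoef a k * Gfac a (a * ((N : ℝ) + 1)) (k + ∑ i, η i)
          * Ffun a (fun i => c i.succ) η := by
  unfold Ffun
  rw [Fin.prod_univ_succ]
  congr 1
  · rw [Fin.cons_zero, Nplus_cons_zero]
    norm_num
  · apply Finset.prod_congr rfl
    intro i _
    rw [Fin.cons_succ, Nplus_cons_succ]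
    congr 2
    push_cast [Fin.val_succ]
    ring

lemma Ffun_smul {N : ℕ} (a t : ℝ) (c : Fin N → ℝ) (η : Fin N → ℕ) :
    Ffun a (fun i => t * c i) η = t ^ (∑ i, η i) * Ffun a c η := by
  unfold Ffun
  rw [← Finset.prod_pow_eq_pow_sum, ← Finset.prod_mul_distrib]
  apply Finset.prod_congr rfl
  intro i _
  rw [mul_pow]
  ring

lemma Ffun_abs {a : ℝ} (ha : 0 < a) {N : ℕ} (c : Fin N → ℝ) (η : Fin N → ℕ) :
    |Ffun a c η| = Ffun a (fun i => |c i|) η := by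
  have hr : ∀ i : Fin N, 0 < a * ((N : ℝ) - (i : ℕ)) := by
    intro i
    have : ((i : ℕ) : ℝ) < N := by exact_mod_cast i.isLt
    have : (0:ℝ) < (N : ℝ) - (i : ℕ) := by linarith
    positivity
  unfold Ffun
  rw [Finset.abs_prod]
  apply Finset.prod_congr rfl
  intro i _
  rw [abs_mul, abs_mul, abs_pow, abs_of_pos (Acoef_pos ha _), abs_of_pos (Gfac_pos ha (hr i) _)]

lemma summable_pi_prod {N : ℕ} (g : Fin N → ℕ → ℝ) (h0 : ∀ i k, 0 ≤ g i k)
    (hg : ∀ i, Summable (g i)) :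
    Summable (fun η : Fin N → ℕ => ∏ i, g i (η i)) := by
  induction N with
  | zero => exact .of_finite
  | succ n ih =>
    have h1 : Summable (fun k => ‖g 0 k‖) := by
      apply Summable.congr (hg 0)
      intro k
      rw [Real.norm_eq_abs, abs_of_nonneg (h0 0 k)]
    have h2 : Summable (fun η : Fin n → ℕ => ‖∏ i : Fin n, g i.succ (η i)‖) := by
      apply Summable.congr (ih (fun i k => g i.succ k) (fun i k => h0 i.succ k)
        (fun i => hg i.succ))
      intro η
      rw [Real.norm_eq_abs, abs_of_nonneg (Finset.prod_nonneg (fun i _ => h0 i.succ (η i)))]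
    have hmul := summable_mul_of_summable_norm h1 h2
    refine ((Fin.consEquiv (fun _ => ℕ)).summable_iff).mp (hmul.congr ?_)
    intro z
    show g 0 z.1 * ∏ i : Fin n, g i.succ (z.2 i)
        = ∏ i : Fin (n+1), g i ((Fin.cons z.1 z.2 : Fin (n+1) → ℕ) i)
    rw [Fin.prod_univ_succ, Fin.cons_zero]
    simp [Fin.cons_succ]

lemma summable_Ffun_abs {a : ℝ} (ha : 0 < a) {N : ℕ} (c : Fin N → ℝ) (hc : ∀ i, |c i| < 1) :
    Summable (fun η : Fin N → ℕ => |Ffun a c η|) := by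
  have hr : ∀ i : Fin N, 0 < a * ((N : ℝ) - (i : ℕ)) := by
    intro i
    have : ((i : ℕ) : ℝ) < N := by exact_mod_cast i.isLt
    have : (0:ℝ) < (N : ℝ) - (i : ℕ) := by linarith
    positivity
  set g : Fin N → ℕ → ℝ :=
    fun i k => |c i| ^ k * Acoef a k * Gfac a (a * ((N : ℝ) - (i : ℕ))) 0 with hgdef
  have hgs : ∀ i, Summable (g i) := by
    intro i
    apply Summable.congr ((summable_Acoef ha (abs_nonneg (c i)) (hc i)).mul_right
      (Gfac a (a * ((N : ℝ) - (i : ℕ))) 0))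
    intro k
    simp only [hgdef]
    ring
  apply Summable.of_nonneg_of_le (fun η => abs_nonneg _) _
    (summable_pi_prod g
      (fun i k => by
        have := (Acoef_pos ha k).le
        have := (Gfac_pos ha (hr i) 0).le
        positivity) hgs)
  intro η
  rw [Ffun_abs ha c η]
  unfold Ffun
  apply Finset.prod_le_prod
  · intro i _
    have := (Acoef_pos ha (η i)).le
    have := (Gfac_pos ha (hr i) (Nplus η i)).le
    positivity
  · intro i _
    simp only [hgdef]
    apply mul_le_mul_of_nonneg_left (Gfac_le ha (hr i) _)
    have := (Acoef_pos ha (η i)).le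
    positivity

lemma summable_Ffun {a : ℝ} (ha : 0 < a) {N : ℕ} (c : Fin N → ℝ) (hc : ∀ i, |c i| < 1) :
    Summable (Ffun a c) := (summable_Ffun_abs ha c hc).of_abs

lemma PhiFun_eq (s : ℝ) {N : ℕ} (c : Fin N → ℝ) :
    PhiFun s c = Real.Gamma (2 * s * ((N : ℝ) + 1)) / Real.Gamma (2 * s)
      * ∑' η : Fin N → ℕ, Ffun (2 * s) c η := by
  unfold PhiFun Ffun Acoef Gfac
  congr 1
  refine tsum_congr fun η => Finset.prod_congr rfl fun i _ => ?_
  rw [show 2 * s * ((N : ℝ) + 1 - (i : ℕ)) + (Nplus η i : ℝ)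
      = 2 * s * ((N : ℝ) - (i : ℕ)) + 2 * s + (Nplus η i : ℝ) from by ring]

lemma main_aux {a : ℝ} (ha : 0 < a) {N : ℕ} (c : Fin (N+1) → ℝ) (hc : ∀ i, |c i| < 1) :
    Real.Gamma (a * ((N:ℝ)+1) + a) / Real.Gamma a * ∑' ζ : Fin (N+1) → ℕ, Ffun a c ζ
      = (1 / (Real.Gamma (a * ((N:ℝ)+1)) * Real.Gamma a / Real.Gamma (a * ((N:ℝ)+1) + a))) *
        ∫ t in (0:ℝ)..1, (1 - t * c 0) ^ (-a) * t ^ (a * ((N:ℝ)+1) - 1) * (1 - t) ^ (a - 1)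
          * (Real.Gamma (a * ((N:ℝ)+1)) / Real.Gamma a
              * ∑' η : Fin N → ℕ, Ffun a (fun i => t * c i.succ) η) := by
  have hΓa := Real.Gamma_pos_of_pos ha
  set p := a * ((N:ℝ)+1) with hp_def
  have hp : 0 < p := by positivity
  have hΓp := Real.Gamma_pos_of_pos hp
  have hΓpa := Real.Gamma_pos_of_pos (show (0:ℝ) < p + a by positivity)
  set C : ℕ × (Fin N → ℕ) → ℝ :=
    fun z => c 0 ^ z.1 * Acoef a z.1 * Ffun a (fun i => c i.succ) z.2 with hC_def
  set g : ℕ × (Fin N → ℕ) → ℝ → ℝ :=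
    fun z t => C z * (t ^ (p + ((z.1 + ∑ i, z.2 i : ℕ) : ℝ) - 1) * (1 - t) ^ (a - 1))
    with hg_def
  -- pointwise expansion on Ioc 0 1
  have hpoint : EqOn
      (fun t => (1 - t * c 0) ^ (-a) * t ^ (p - 1) * (1 - t) ^ (a - 1)
        * (Real.Gamma p / Real.Gamma a
            * ∑' η : Fin N → ℕ, Ffun a (fun i => t * c i.succ) η))
      (fun t => Real.Gamma p / Real.Gamma a * ∑' z : ℕ × (Fin N → ℕ), g z t)
      (Ioc (0:ℝ) 1) := by
    intro t ht
    obtain ⟨ht0, ht1⟩ := ht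
    have htc : ∀ i : Fin (N+1), |t * c i| < 1 := by
      intro i
      rw [abs_mul, abs_of_pos ht0]
      calc t * |c i| ≤ 1 * |c i| := mul_le_mul_of_nonneg_right ht1 (abs_nonneg _)
        _ = |c i| := one_mul _
        _ < 1 := hc i
    have hb : HasSum (fun k : ℕ => Acoef a k * (t * c 0) ^ k) ((1 - t * c 0) ^ (-a)) :=
      hasSum_binom ha (htc 0)
    have hs1 : Summable (fun k : ℕ => ‖Acoef a k * (t * c 0) ^ k‖) := by
      apply Summable.congr (summable_Acoef ha (abs_nonneg (t * c 0)) (htc 0))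
      intro k
      simp only [Real.norm_eq_abs, abs_mul, abs_pow, abs_of_pos (Acoef_pos ha k)]
    have hs2 : Summable (fun η : Fin N → ℕ => ‖Ffun a (fun i => t * c i.succ) η‖) := by
      apply Summable.congr (summable_Ffun_abs ha (fun i => t * c i.succ)
        (fun i => htc i.succ))
      intro η
      rw [Real.norm_eq_abs]
    have hmul := tsum_mul_tsum_of_summable_norm hs1 hs2
    show (1 - t * c 0) ^ (-a) * t ^ (p - 1) * (1 - t) ^ (a - 1)
        * (Real.Gamma p / Real.Gamma a
            * ∑' η : Fin N → ℕ, Ffun a (fun i => t * c i.succ) η)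
      = Real.Gamma p / Real.Gamma a * ∑' z : ℕ × (Fin N → ℕ), g z t
    rw [← hb.tsum_eq]
    have step1 : (∑' k, Acoef a k * (t * c 0) ^ k) * t ^ (p - 1) * (1 - t) ^ (a - 1)
        * (Real.Gamma p / Real.Gamma a
            * ∑' η : Fin N → ℕ, Ffun a (fun i => t * c i.succ) η)
      = Real.Gamma p / Real.Gamma a * ((t ^ (p - 1) * (1 - t) ^ (a - 1))
          * ((∑' k, Acoef a k * (t * c 0) ^ k)
              * ∑' η : Fin N → ℕ, Ffun a (fun i => t * c i.succ) η)) := by ring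
    rw [step1, hmul]
    rw [← tsum_mul_left (a := t ^ (p - 1) * (1 - t) ^ (a - 1))]
    congr 1
    apply tsum_congr
    intro z
    have hsm : Ffun a (fun i : Fin N => t * c i.succ) z.2
        = t ^ (∑ i, z.2 i) * Ffun a (fun i => c i.succ) z.2 :=
      Ffun_smul a t (fun i => c i.succ) z.2
    have hps : t ^ (p + ((z.1 + ∑ i, z.2 i : ℕ) : ℝ) - 1)
        = t ^ (p - 1) * (t ^ z.1 * t ^ (∑ i, z.2 i)) := by
      rw [show p + ((z.1 + ∑ i, z.2 i : ℕ) : ℝ) - 1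
          = (p - 1) + ((z.1 + ∑ i, z.2 i : ℕ) : ℝ) from by ring]
      rw [Real.rpow_add ht0, Real.rpow_natCast, pow_add]
    simp only [hg_def, hC_def, hsm, hps, mul_pow]
    ring
  -- integrability of each g z
  have hgint : ∀ z : ℕ × (Fin N → ℕ), Integrable (g z) (volume.restrict (Ioc (0:ℝ) 1)) := by
    intro z
    have hb := betaIntegrable (p := p + ((z.1 + ∑ i, z.2 i : ℕ) : ℝ)) (q := a)
      (by positivity) ha
    rw [intervalIntegrable_iff_integrableOn_Ioc_of_le zero_le_one] at hb
    have := hb.const_mul (C z)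
    exact this
  -- the beta integral of each term
  have hbeta : ∀ m : ℕ, ∫ t in Ioc (0:ℝ) 1, t ^ (p + (m:ℝ) - 1) * (1 - t) ^ (a - 1)
      = Real.Gamma a * Gfac a p m := by
    intro m
    rw [← intervalIntegral.integral_of_le zero_le_one]
    have h := betaValue (p := p + (m:ℝ)) (q := a) (by positivity) ha
    rw [h]
    unfold Gfac
    rw [show p + a + (m:ℝ) = p + (m:ℝ) + a from by ring]
    ring
  have hIval : ∀ z : ℕ × (Fin N → ℕ), ∫ t in Ioc (0:ℝ) 1, g z t
      = Real.Gamma a * Ffun a c (Fin.cons z.1 z.2) := by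
    intro z
    simp only [hg_def]
    rw [MeasureTheory.integral_const_mul, hbeta (z.1 + ∑ i, z.2 i)]
    rw [Ffun_cons a c z.1 z.2, ← hp_def, hC_def]
    ring
  -- norm integrals
  have hnormval : ∀ z : ℕ × (Fin N → ℕ), ∫ t in Ioc (0:ℝ) 1, ‖g z t‖
      = |C z| * (Real.Gamma a * Gfac a p (z.1 + ∑ i, z.2 i)) := by
    intro z
    rw [← hbeta (z.1 + ∑ i, z.2 i), ← MeasureTheory.integral_const_mul]
    apply setIntegral_congr_fun measurableSet_Ioc
    intro t ht
    obtain ⟨ht0, ht1⟩ := ht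
    show ‖g z t‖ = |C z| * (t ^ (p + ((z.1 + ∑ i, z.2 i : ℕ) : ℝ) - 1) * (1 - t) ^ (a - 1))
    simp only [hg_def]
    rw [Real.norm_eq_abs, abs_mul (C z),
      abs_mul (t ^ (p + ((z.1 + ∑ i, z.2 i : ℕ) : ℝ) - 1)) ((1 - t) ^ (a - 1)),
      abs_of_nonneg (Real.rpow_nonneg ht0.le _),
      abs_of_nonneg (Real.rpow_nonneg (show (0:ℝ) ≤ 1 - t by linarith) _)]
  have hnorm : Summable fun z : ℕ × (Fin N → ℕ) => ∫ t in Ioc (0:ℝ) 1, ‖g z t‖ := by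
    apply Summable.congr _ (fun z => (hnormval z).symm)
    have hS : Summable (fun z : ℕ × (Fin N → ℕ)
        => Real.Gamma a * |Ffun a c (Fin.cons z.1 z.2)|) := by
      apply Summable.mul_left
      exact ((Fin.consEquiv (fun _ => ℕ)).summable_iff).mpr (summable_Ffun_abs ha c hc)
    apply Summable.congr hS
    intro z
    have h2 : |Ffun a (fun i : Fin N => c i.succ) z.2|
        = Ffun a (fun i : Fin N => |c i.succ|) z.2 := Ffun_abs ha _ z.2
    have h3 : |Ffun a c (Fin.cons z.1 z.2)|
        = Ffun a (fun i => |c i|) (Fin.cons z.1 z.2) := Ffun_abs ha c _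
    have hCz : |C z| = |c 0| ^ z.1 * Acoef a z.1 * Ffun a (fun i : Fin N => |c i.succ|) z.2 := by
      simp only [hC_def]
      rw [abs_mul, abs_mul, abs_pow, abs_of_pos (Acoef_pos ha _), h2]
    rw [h3, Ffun_cons a (fun i => |c i|) z.1 z.2, ← hp_def, hCz]
    ring
  have key := MeasureTheory.integral_tsum_of_summable_integral_norm hgint hnorm
  rw [intervalIntegral.integral_of_le zero_le_one,
    setIntegral_congr_fun measurableSet_Ioc hpoint,
    MeasureTheory.integral_const_mul, ← key, tsum_congr hIval, tsum_mul_left]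
  rw [show (∑' z : ℕ × (Fin N → ℕ), Ffun a c (Fin.cons z.1 z.2))
      = ∑' ζ : Fin (N+1) → ℕ, Ffun a c ζ from
    Equiv.tsum_eq (Fin.consEquiv (fun _ => ℕ)) (fun ζ => Ffun a c ζ)]
  field_simp

/-- Recursion for `Φ`: for a system of size `N+1` (paper's `N ≥ 1`),
`Φ_{N+1}(c_1,…,c_{N+1}) = (1/B(2s(N+1),2s)) ∫_0^1 (1−t c_1)^{−2s} t^{2s(N+1)−1} (1−t)^{2s−1}
Φ_N(t c_2,…,t c_{N+1}) dt`, where `B(a,b) = Γ(a)Γ(b)/Γ(a+b)`. -/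
theorem PhiFun_recursion (s : ℝ) (hs : 0 < s) (N : ℕ) (c : Fin (N + 1) → ℝ)
    (hc : ∀ i, |c i| < 1) :
    PhiFun s c
      = (1 / (Real.Gamma (2 * s * ((N : ℝ) + 1)) * Real.Gamma (2 * s) /
            Real.Gamma (2 * s * ((N : ℝ) + 1) + 2 * s))) *
        ∫ t in (0 : ℝ)..1,
          (1 - t * c 0) ^ (-(2 * s)) * t ^ (2 * s * ((N : ℝ) + 1) - 1) * (1 - t) ^ (2 * s - 1)
            * PhiFun s (fun i : Fin N => t * c i.succ) := by
  have ha : (0:ℝ) < 2 * s := by linarith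
  have hcast : 2 * s * (((N + 1 : ℕ) : ℝ) + 1) = 2 * s * ((N : ℝ) + 1) + 2 * s := by
    push_cast; ring
  have hintg : ∀ t : ℝ,
      (1 - t * c 0) ^ (-(2 * s)) * t ^ (2 * s * ((N : ℝ) + 1) - 1) * (1 - t) ^ (2 * s - 1)
          * PhiFun s (fun i : Fin N => t * c i.succ)
        = (1 - t * c 0) ^ (-(2 * s)) * t ^ (2 * s * ((N : ℝ) + 1) - 1) * (1 - t) ^ (2 * s - 1)
          * (Real.Gamma (2 * s * ((N : ℝ) + 1)) / Real.Gamma (2 * s)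
              * ∑' η : Fin N → ℕ, Ffun (2 * s) (fun i => t * c i.succ) η) := by
    intro t
    rw [PhiFun_eq]
  rw [intervalIntegral.integral_congr (fun t _ => hintg t)]
  rw [PhiFun_eq s c, hcast]
  exact main_aux ha c hc
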